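/- For the one-dimensional harmonic oscillator with time-dependent frequency, with Hamiltonian h(t,q,p) = p²/2 + ω(t)² q²/2, the function I(q,p) with I = h₁h₃ − h₂² (where h₁ = q²/2, h₂ = −qp/2, h₃ = p²/2) is identically zero; for n ≥ 2, I(q,p) = (1/4) ∑_{1≤i<j≤n} (q_i p_j − q_j p_i)² Poisson-commutes with each of h₁ = (1/2)∑ q_i², h₂ = −(1/2)∑ q_i p_i, h₃ = (1/2)∑ p_i², and hence is a t-independent constant of the motion for the n-dimensional time-dependent isotropic harmonic oscillator. -/

import Mathlib

/-- Partial derivative of a function on `Fin k → ℝ` in the `i`-th coordinate. -/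
noncomputable def pd {k : ℕ} (f : (Fin k → ℝ) → ℝ) (x : Fin k → ℝ) (i : Fin k) : ℝ :=
  deriv (fun t => f (Function.update x i t)) (x i)

/-- Canonical Poisson bracket on `T*ℝⁿ`. -/
noncomputable def pbracket (n : ℕ) (f g : (Fin n → ℝ) → (Fin n → ℝ) → ℝ)
    (q p : Fin n → ℝ) : ℝ :=
  ∑ i, (pd (fun q' => f q' p) q i * pd (g q) p i -
        pd (fun q' => g q' p) q i * pd (f q) p i)

lemma hasDerivAt_coord (c : ℝ) (cond : Prop) [Decidable cond] (t : ℝ) :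
    HasDerivAt (fun s : ℝ => if cond then s else c) (if cond then 1 else 0) t := by
  split_ifs
  · exact hasDerivAt_id t
  · exact hasDerivAt_const t c

lemma pd_const {n : ℕ} (c : ℝ) (x : Fin n → ℝ) (i : Fin n) :
    pd (fun _ => c) x i = 0 := by
  simp [pd]

lemma pd_half_sum_sq {n : ℕ} (x : Fin n → ℝ) (k : Fin n) :
    pd (fun y => (1 / 2 : ℝ) * ∑ j, (y j) ^ 2) x k = x k := by
  have hD : HasDerivAt (fun t : ℝ => (1 / 2 : ℝ) * ∑ j, (Function.update x k t j) ^ 2)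
      ((1 / 2 : ℝ) * ∑ j : Fin n, (if j = k then 2 * x k else 0)) (x k) := by
    apply HasDerivAt.const_mul
    apply HasDerivAt.fun_sum
    intro j _
    simp only [Function.update_apply]
    have h := (hasDerivAt_coord (x j) (j = k) (x k)).pow 2
    refine h.congr_deriv ?_
    split_ifs with h1
    · subst h1; ring
    · ring
  rw [pd]
  rw [hD.deriv]
  simp [Finset.sum_ite_eq']

lemma pd_neg_half_sum_mul {n : ℕ} (v : Fin n → ℝ) (x : Fin n → ℝ) (k : Fin n) :
    pd (fun y => -((1 / 2 : ℝ) * ∑ j, y j * v j)) x k = -(v k / 2) := by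
  have hD : HasDerivAt (fun t : ℝ => -((1 / 2 : ℝ) * ∑ j, (Function.update x k t j) * v j))
      (-((1 / 2 : ℝ) * ∑ j : Fin n, (if j = k then v k else 0))) (x k) := by
    apply HasDerivAt.neg
    apply HasDerivAt.const_mul
    apply HasDerivAt.fun_sum
    intro j _
    simp only [Function.update_apply]
    have h := (hasDerivAt_coord (x j) (j = k) (x k)).mul_const (v j)
    refine h.congr_deriv ?_
    split_ifs with h1
    · subst h1; ring
    · ring
  rw [pd, hD.deriv]
  simp [Finset.sum_ite_eq']
  ring

lemma sum_antisymm_zero {n : ℕ} (F : Fin n → Fin n → ℝ) (h : ∀ a b, F a b = -F b a) :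
    ∑ a, ∑ b, F a b = 0 := by
  have h2 : (∑ a, ∑ b, F a b) = -(∑ a, ∑ b, F a b) := by
    calc ∑ a, ∑ b, F a b = ∑ b, ∑ a, F a b := Finset.sum_comm
      _ = ∑ b, ∑ a, -(F b a) :=
        Finset.sum_congr rfl fun b _ => Finset.sum_congr rfl fun a _ => h a b
      _ = -(∑ a, ∑ b, F a b) := by simp
  linarith

lemma key_sum {n : ℕ} (k : Fin n) (B : Fin n → Fin n → ℝ) (hB : ∀ i j, B i j = -B j i)
    (v : Fin n → ℝ) :
    (∑ i, ∑ j, if i < j then B i j * ((if i = k then v j else 0) - (if j = k then v i else 0)) else 0)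
      = ∑ j, B k j * v j := by
  have step1 : (∑ i, ∑ j, if i < j then B i j * ((if i = k then v j else 0) - (if j = k then v i else 0)) else 0)
      = (∑ i, ∑ j, (if i = k then (if i < j then B i j * v j else 0) else 0))
        - (∑ i, ∑ j, (if j = k then (if i < j then B i j * v i else 0) else 0)) := by
    rw [← Finset.sum_sub_distrib]
    apply Finset.sum_congr rfl; intro i _
    rw [← Finset.sum_sub_distrib]
    apply Finset.sum_congr rfl; intro j _
    split_ifs <;> ring
  rw [step1]
  have e1 : (∑ i, ∑ j, (if i = k then (if i < j then B i j * v j else 0) else 0))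
      = ∑ j, (if k < j then B k j * v j else 0) := by
    rw [Finset.sum_comm]
    apply Finset.sum_congr rfl; intro j _
    simp [Finset.sum_ite_eq']
  have e2 : (∑ i, ∑ j, (if j = k then (if i < j then B i j * v i else 0) else 0))
      = ∑ i, (if i < k then B i k * v i else 0) := by
    apply Finset.sum_congr rfl; intro i _
    simp [Finset.sum_ite_eq']
  rw [e1, e2, ← Finset.sum_sub_distrib]
  apply Finset.sum_congr rfl; intro j _
  rcases lt_trichotomy k j with h | h | h
  · simp [h, not_lt_of_gt h]
  · subst h
    have h0 : B k k = 0 := by have := hB k k; linarith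
    simp [h0]
  · rw [if_neg (not_lt_of_gt h), if_pos h, hB j k]; ring

lemma pd_I_q {n : ℕ} (q p : Fin n → ℝ) (k : Fin n) :
    pd (fun q' => (1 / 4 : ℝ) * ∑ i : Fin n, ∑ j : Fin n,
        if i < j then (q' i * p j - q' j * p i) ^ 2 else 0) q k
      = (1 / 2 : ℝ) * ∑ j, (q k * p j - q j * p k) * p j := by
  have hD : HasDerivAt (fun t : ℝ => (1 / 4 : ℝ) * ∑ i : Fin n, ∑ j : Fin n,
      if i < j then ((Function.update q k t) i * p j - (Function.update q k t) j * p i) ^ 2 else 0)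
      ((1 / 4 : ℝ) * ∑ i : Fin n, ∑ j : Fin n,
        if i < j then (2 * (q i * p j - q j * p i)) *
          ((if i = k then p j else 0) - (if j = k then p i else 0)) else 0) (q k) := by
    apply HasDerivAt.const_mul
    apply HasDerivAt.fun_sum; intro i _
    apply HasDerivAt.fun_sum; intro j _
    simp only [Function.update_apply]
    by_cases hij : i < j
    · simp only [if_pos hij]
      have hL := ((hasDerivAt_coord (q i) (i = k) (q k)).mul_const (p j)).sub
        ((hasDerivAt_coord (q j) (j = k) (q k)).mul_const (p i))
      have h := hL.pow 2
      refine h.congr_deriv ?_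
      push_cast [Pi.sub_apply]
      split_ifs with h1 h2 h2
      · subst h1; subst h2; exact absurd hij (lt_irrefl _)
      · subst h1; ring
      · subst h2; ring
      · ring
    · simp only [if_neg hij]
      exact hasDerivAt_const _ _
  rw [pd, hD.deriv]
  rw [key_sum k (fun i j => 2 * (q i * p j - q j * p i)) (by intro i j; ring) p]
  rw [Finset.mul_sum, Finset.mul_sum]
  apply Finset.sum_congr rfl; intro j _; ring

lemma pd_I_p {n : ℕ} (q p : Fin n → ℝ) (k : Fin n) :
    pd (fun p' => (1 / 4 : ℝ) * ∑ i : Fin n, ∑ j : Fin n,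
        if i < j then (q i * p' j - q j * p' i) ^ 2 else 0) p k
      = (1 / 2 : ℝ) * ∑ j, q j * (q j * p k - q k * p j) := by
  have hD : HasDerivAt (fun t : ℝ => (1 / 4 : ℝ) * ∑ i : Fin n, ∑ j : Fin n,
      if i < j then (q i * (Function.update p k t) j - q j * (Function.update p k t) i) ^ 2 else 0)
      ((1 / 4 : ℝ) * ∑ i : Fin n, ∑ j : Fin n,
        if i < j then (-(2 * (q i * p j - q j * p i))) *
          ((if i = k then q j else 0) - (if j = k then q i else 0)) else 0) (p k) := by
    apply HasDerivAt.const_mul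
    apply HasDerivAt.fun_sum; intro i _
    apply HasDerivAt.fun_sum; intro j _
    simp only [Function.update_apply]
    by_cases hij : i < j
    · simp only [if_pos hij]
      have hL := ((hasDerivAt_coord (p j) (j = k) (p k)).const_mul (q i)).sub
        ((hasDerivAt_coord (p i) (i = k) (p k)).const_mul (q j))
      have h := hL.pow 2
      refine h.congr_deriv ?_
      push_cast [Pi.sub_apply]
      split_ifs with h1 h2 h2
      · subst h1; subst h2; exact absurd hij (lt_irrefl _)
      · subst h1; ring
      · subst h2; ring
      · ring
    · simp only [if_neg hij]
      exact hasDerivAt_const _ _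
  rw [pd, hD.deriv]
  rw [key_sum k (fun i j => -(2 * (q i * p j - q j * p i))) (by intro i j; ring) q]
  rw [Finset.mul_sum, Finset.mul_sum]
  apply Finset.sum_congr rfl; intro j _; ring

lemma lagrange_identity {n : ℕ} (q p : Fin n → ℝ) :
    (∑ i, (q i) ^ 2) * (∑ i, (p i) ^ 2) - (∑ i, q i * p i) ^ 2
      = ∑ i : Fin n, ∑ j : Fin n, if i < j then (q i * p j - q j * p i) ^ 2 else 0 := by
  have symm : (∑ i : Fin n, ∑ j : Fin n, if i < j then (q i * p j - q j * p i) ^ 2 else 0)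
      = (∑ i : Fin n, ∑ j : Fin n, if j < i then (q i * p j - q j * p i) ^ 2 else 0) := by
    rw [Finset.sum_comm]
    apply Finset.sum_congr rfl; intro i _
    apply Finset.sum_congr rfl; intro j _
    split_ifs <;> ring
  have half : 2 * (∑ i : Fin n, ∑ j : Fin n, if i < j then (q i * p j - q j * p i) ^ 2 else 0)
      = ∑ i : Fin n, ∑ j : Fin n, (q i * p j - q j * p i) ^ 2 := by
    have hsplit : (2 : ℝ) * (∑ i : Fin n, ∑ j : Fin n, if i < j then (q i * p j - q j * p i) ^ 2 else 0)
        = (∑ i : Fin n, ∑ j : Fin n, if i < j then (q i * p j - q j * p i) ^ 2 else 0)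
          + (∑ i : Fin n, ∑ j : Fin n, if j < i then (q i * p j - q j * p i) ^ 2 else 0) := by
      rw [← symm]; ring
    rw [hsplit, ← Finset.sum_add_distrib]
    apply Finset.sum_congr rfl; intro i _
    rw [← Finset.sum_add_distrib]
    apply Finset.sum_congr rfl; intro j _
    rcases lt_trichotomy i j with h | h | h
    · rw [if_pos h, if_neg (not_lt_of_gt h)]; ring
    · subst h; simp
    · rw [if_neg (not_lt_of_gt h), if_pos h]; ring
  have expand : ∑ i : Fin n, ∑ j : Fin n, (q i * p j - q j * p i) ^ 2
      = (∑ i : Fin n, ∑ j : Fin n, (q i) ^ 2 * (p j) ^ 2)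
        + (∑ i : Fin n, ∑ j : Fin n, (p i) ^ 2 * (q j) ^ 2)
        - 2 * (∑ i : Fin n, ∑ j : Fin n, (q i * p i) * (q j * p j)) := by
    rw [Finset.mul_sum, ← Finset.sum_add_distrib, ← Finset.sum_sub_distrib]
    apply Finset.sum_congr rfl; intro i _
    rw [Finset.mul_sum, ← Finset.sum_add_distrib, ← Finset.sum_sub_distrib]
    apply Finset.sum_congr rfl; intro j _
    ring
  have e1 : (∑ i : Fin n, ∑ j : Fin n, (q i) ^ 2 * (p j) ^ 2)
      = (∑ i, (q i) ^ 2) * (∑ i, (p i) ^ 2) := by rw [Finset.sum_mul_sum]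
  have e2 : (∑ i : Fin n, ∑ j : Fin n, (p i) ^ 2 * (q j) ^ 2)
      = (∑ i, (p i) ^ 2) * (∑ i, (q i) ^ 2) := by rw [Finset.sum_mul_sum]
  have e3 : (∑ i : Fin n, ∑ j : Fin n, (q i * p i) * (q j * p j))
      = (∑ i, q i * p i) * (∑ i, q i * p i) := by rw [Finset.sum_mul_sum]
  have := half
  rw [expand, e1, e2, e3] at this
  nlinarith [this]

lemma hasDerivAt_half_sum_sq {n : ℕ} (x : Fin n → ℝ) (k : Fin n) :
    HasDerivAt (fun t : ℝ => (1 / 2 : ℝ) * ∑ j, (Function.update x k t j) ^ 2) (x k) (x k) := by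
  have hD : HasDerivAt (fun t : ℝ => (1 / 2 : ℝ) * ∑ j, (Function.update x k t j) ^ 2)
      ((1 / 2 : ℝ) * ∑ j : Fin n, (if j = k then 2 * x k else 0)) (x k) := by
    apply HasDerivAt.const_mul
    apply HasDerivAt.fun_sum
    intro j _
    simp only [Function.update_apply]
    have h := (hasDerivAt_coord (x j) (j = k) (x k)).pow 2
    refine h.congr_deriv ?_
    split_ifs with h1
    · subst h1; ring
    · ring
  convert hD using 1
  simp [Finset.sum_ite_eq']

lemma pd_neg_half_sum_mul' {n : ℕ} (v : Fin n → ℝ) (x : Fin n → ℝ) (k : Fin n) :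
    pd (fun y => -((1 / 2 : ℝ) * ∑ j, v j * y j)) x k = -(v k / 2) := by
  have hD : HasDerivAt (fun t : ℝ => -((1 / 2 : ℝ) * ∑ j, v j * (Function.update x k t j)))
      (-((1 / 2 : ℝ) * ∑ j : Fin n, (if j = k then v k else 0))) (x k) := by
    apply HasDerivAt.neg
    apply HasDerivAt.const_mul
    apply HasDerivAt.fun_sum
    intro j _
    simp only [Function.update_apply]
    have h := (hasDerivAt_coord (x j) (j = k) (x k)).const_mul (v j)
    refine h.congr_deriv ?_
    split_ifs with h1
    · subst h1; ring
    · ring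
  rw [pd, hD.deriv]
  simp [Finset.sum_ite_eq']
  ring

lemma pd_osc_q {n : ℕ} (c a : ℝ) (x : Fin n → ℝ) (k : Fin n) :
    pd (fun y => c + a * ((1 / 2 : ℝ) * ∑ j, (y j) ^ 2)) x k = a * x k := by
  rw [pd]
  exact (((hasDerivAt_half_sum_sq x k).const_mul a).const_add c).deriv

lemma pd_osc_p {n : ℕ} (c : ℝ) (x : Fin n → ℝ) (k : Fin n) :
    pd (fun y => (1 / 2 : ℝ) * ∑ j, (y j) ^ 2 + c) x k = x k := by
  rw [pd]
  exact ((hasDerivAt_half_sum_sq x k).add_const c).deriv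

/-- For the `t`-dependent harmonic oscillator: in one dimension the function
`I = h₁h₃ − h₂²` (with `h₁ = q²/2`, `h₂ = −qp/2`, `h₃ = p²/2`) vanishes
identically; in dimension `n ≥ 2`, `I = (1/4)∑_{i<j}(q_i p_j − q_j p_i)²`
equals `h₁h₃ − h₂²` and Poisson-commutes with `h₁ = (1/2)∑ q_i²`,
`h₂ = −(1/2)∑ q_i p_i`, `h₃ = (1/2)∑ p_i²`, hence also with the `t`-dependent
oscillator Hamiltonian `h₃ + ω(t)² h₁`, i.e. it is a `t`-independent constant
of the motion. -/
theorem oscillator_angular_momentum_invariant (n : ℕ) (hn : 2 ≤ n)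
    (ω : ℝ → ℝ)
    (h1 h2 h3 I : (Fin n → ℝ) → (Fin n → ℝ) → ℝ)
    (hh1 : h1 = fun q _ => (1 / 2) * ∑ i, (q i) ^ 2)
    (hh2 : h2 = fun q p => -((1 / 2) * ∑ i, q i * p i))
    (hh3 : h3 = fun _ p => (1 / 2) * ∑ i, (p i) ^ 2)
    (hI : I = fun q p => (1 / 4) * ∑ i : Fin n, ∑ j : Fin n,
      if i < j then (q i * p j - q j * p i) ^ 2 else 0) :
    (∀ q' p' : ℝ, ((q' ^ 2) / 2) * ((p' ^ 2) / 2) - (-(q' * p') / 2) ^ 2 = 0) ∧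
    (∀ q p : Fin n → ℝ, h1 q p * h3 q p - (h2 q p) ^ 2 = I q p) ∧
    (∀ q p : Fin n → ℝ, pbracket n I h1 q p = 0) ∧
    (∀ q p : Fin n → ℝ, pbracket n I h2 q p = 0) ∧
    (∀ q p : Fin n → ℝ, pbracket n I h3 q p = 0) ∧
    (∀ (t : ℝ) (q p : Fin n → ℝ),
      pbracket n I (fun q' p' => h3 q' p' + (ω t) ^ 2 * h1 q' p') q p = 0) := by
  subst hh1 hh2 hh3 hI
  refine ⟨fun q' p' => by ring, ?_, ?_, ?_, ?_, ?_⟩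
  · intro q p
    have h := lagrange_identity q p
    simp only []
    linear_combination (1 / 4 : ℝ) * h
  · intro q p
    simp only [pbracket, pd_I_q, pd_I_p, pd_half_sum_sq, pd_const]
    simp only [mul_zero, zero_sub, Finset.mul_sum, neg_mul, mul_neg, ← Finset.sum_neg_distrib]
    apply sum_antisymm_zero
    intro a b; ring
  · intro q p
    simp only [pbracket, pd_I_q, pd_I_p, pd_neg_half_sum_mul, pd_neg_half_sum_mul']
    simp only [Finset.mul_sum, Finset.sum_mul, neg_mul, mul_neg, ← Finset.sum_neg_distrib,
      ← Finset.sum_sub_distrib]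
    apply sum_antisymm_zero
    intro a b; ring
  · intro q p
    simp only [pbracket, pd_I_q, pd_I_p, pd_half_sum_sq, pd_const]
    simp only [zero_mul, mul_zero, Finset.mul_sum, Finset.sum_mul, Finset.sum_const_zero, sub_zero]
    apply sum_antisymm_zero
    intro a b; ring
  · intro t q p
    simp only [pbracket, pd_I_q, pd_I_p, pd_osc_q, pd_osc_p]
    simp only [Finset.mul_sum, Finset.sum_mul, neg_mul, mul_neg, ← Finset.sum_neg_distrib,
      ← Finset.sum_sub_distrib]
    apply sum_antisymm_zero
    intro a b; ring
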